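/- Let $(A,\circ_A)$ be a Zinbiel algebra and $r\in A\otimes A$ with skew-symmetric part $a$. If $a$ is $(L,L+R)$-invariant, i.e., $(L_x\otimes\mathrm{Id} - \mathrm{Id}\otimes(L_x+R_x))a = 0$ for all $x\in A$, then $(L_{x\circ_A y}\otimes\mathrm{Id} - \mathrm{Id}\otimes L_{x\circ_A y} - L_xL_y\otimes\mathrm{Id} + L_x\otimes L_y)(a) = 0$ for all $x,y\in A$. -/
import Mathlib


open scoped TensorProduct

/-- Let `(A, ∘)` be a Zinbiel algebra and `r ∈ A ⊗ A` with skew-symmetric part `a`.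
If `a` is `(L, L+R)`-invariant, i.e., `(L_x ⊗ Id - Id ⊗ (L_x + R_x)) a = 0` for all `x`,
then `(L_{x∘y} ⊗ Id - Id ⊗ L_{x∘y} - L_x L_y ⊗ Id + L_x ⊗ L_y)(a) = 0` for all `x, y`. -/
theorem invariant_skew_part_identity {K : Type*} [Field K] {A : Type*} [AddCommGroup A]
    [Module K A] (mul : A →ₗ[K] A →ₗ[K] A)
    (hZ : ∀ x y z : A, mul x (mul y z) = mul (mul x y + mul y x) z)
    (r a : A ⊗[K] A)
    (ha : a = (2 : K)⁻¹ • (r - TensorProduct.comm K A A r))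
    (hinv : ∀ x : A,
      (TensorProduct.map (mul x) (LinearMap.id : A →ₗ[K] A)
        - TensorProduct.map (LinearMap.id : A →ₗ[K] A) (mul x + mul.flip x)) a = 0) :
    ∀ x y : A,
      (TensorProduct.map (mul (mul x y)) (LinearMap.id : A →ₗ[K] A)
        - TensorProduct.map (LinearMap.id : A →ₗ[K] A) (mul (mul x y))
        - TensorProduct.map ((mul x) ∘ₗ (mul y)) (LinearMap.id : A →ₗ[K] A)
        + TensorProduct.map (mul x) (mul y)) a = 0 := by
  intro x y
  -- the operator `h u = L_u + R_u`
  set h : A → A →ₗ[K] A := fun u => mul u + mul.flip u with hh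
  -- left and right tensor factors commute
  have hcomm : ∀ (f g : A →ₗ[K] A) (t : A ⊗[K] A),
      TensorProduct.map f LinearMap.id (TensorProduct.map LinearMap.id g t)
        = TensorProduct.map LinearMap.id g (TensorProduct.map f LinearMap.id t) := by
    intro f g t
    have h1 : TensorProduct.map f LinearMap.id ∘ₗ TensorProduct.map LinearMap.id g
        = TensorProduct.map f g := by
      rw [← TensorProduct.map_comp]; simp
    have h2 : TensorProduct.map LinearMap.id g ∘ₗ TensorProduct.map f LinearMap.id
        = TensorProduct.map f g := by
      rw [← TensorProduct.map_comp]; simp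
    calc TensorProduct.map f LinearMap.id (TensorProduct.map LinearMap.id g t)
        = (TensorProduct.map f LinearMap.id ∘ₗ TensorProduct.map LinearMap.id g) t := rfl
      _ = (TensorProduct.map LinearMap.id g ∘ₗ TensorProduct.map f LinearMap.id) t := by
          rw [h1, h2]
      _ = _ := rfl
  -- composition on the right leg
  have hcompR : ∀ (f g : A →ₗ[K] A) (t : A ⊗[K] A),
      TensorProduct.map LinearMap.id f (TensorProduct.map LinearMap.id g t)
        = TensorProduct.map LinearMap.id (f ∘ₗ g) t := by
    intro f g t
    have : TensorProduct.map (LinearMap.id : A →ₗ[K] A) (f ∘ₗ g)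
        = TensorProduct.map LinearMap.id f ∘ₗ TensorProduct.map LinearMap.id g := by
      rw [← TensorProduct.map_comp]; simp
    rw [this]; rfl
  -- the invariance hypothesis, rewritten
  have hL : ∀ u : A,
      TensorProduct.map (mul u) (LinearMap.id : A →ₗ[K] A) a
        = TensorProduct.map (LinearMap.id : A →ₗ[K] A) (h u) a := by
    intro u
    have := hinv u
    rw [LinearMap.sub_apply, sub_eq_zero] at this
    exact this
  simp only [LinearMap.sub_apply, LinearMap.add_apply]
  -- rewrite each of the four terms in the form `map id g a`
  have e1 : TensorProduct.map (mul (mul x y)) (LinearMap.id : A →ₗ[K] A) a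
      = TensorProduct.map (LinearMap.id : A →ₗ[K] A) (h (mul x y)) a := hL _
  have e3 : TensorProduct.map ((mul x) ∘ₗ (mul y)) (LinearMap.id : A →ₗ[K] A) a
      = TensorProduct.map (LinearMap.id : A →ₗ[K] A) (h y ∘ₗ h x) a := by
    have hsplit : TensorProduct.map ((mul x) ∘ₗ (mul y)) (LinearMap.id : A →ₗ[K] A)
        = TensorProduct.map (mul x) LinearMap.id ∘ₗ TensorProduct.map (mul y) LinearMap.id := by
      rw [← TensorProduct.map_comp]; simp
    calc TensorProduct.map ((mul x) ∘ₗ (mul y)) (LinearMap.id : A →ₗ[K] A) a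
        = TensorProduct.map (mul x) LinearMap.id (TensorProduct.map (mul y) LinearMap.id a) := by
          rw [hsplit]; rfl
      _ = TensorProduct.map (mul x) LinearMap.id
            (TensorProduct.map LinearMap.id (h y) a) := by rw [hL y]
      _ = TensorProduct.map LinearMap.id (h y)
            (TensorProduct.map (mul x) LinearMap.id a) := hcomm _ _ _
      _ = TensorProduct.map LinearMap.id (h y)
            (TensorProduct.map LinearMap.id (h x) a) := by rw [hL x]
      _ = TensorProduct.map (LinearMap.id : A →ₗ[K] A) (h y ∘ₗ h x) a := hcompR _ _ _
  have e4 : TensorProduct.map (mul x) (mul y) a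
      = TensorProduct.map (LinearMap.id : A →ₗ[K] A) (mul y ∘ₗ h x) a := by
    have hsplit : TensorProduct.map (mul x) (mul y)
        = TensorProduct.map LinearMap.id (mul y) ∘ₗ TensorProduct.map (mul x) LinearMap.id := by
      rw [← TensorProduct.map_comp]; simp
    calc TensorProduct.map (mul x) (mul y) a
        = TensorProduct.map LinearMap.id (mul y)
            (TensorProduct.map (mul x) LinearMap.id a) := by rw [hsplit]; rfl
      _ = TensorProduct.map LinearMap.id (mul y)
            (TensorProduct.map LinearMap.id (h x) a) := by rw [hL x]
      _ = TensorProduct.map (LinearMap.id : A →ₗ[K] A) (mul y ∘ₗ h x) a := hcompR _ _ _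
  rw [e1, e3, e4]
  -- the remaining operator identity on the right leg (Zinbiel identity)
  have op : h (mul x y) + mul y ∘ₗ h x = mul (mul x y) + (h y ∘ₗ h x) := by
    ext z
    simp only [hh, LinearMap.add_apply, LinearMap.comp_apply, LinearMap.flip_apply,
      map_add]
    have hz := hZ z x y
    rw [add_comm (mul z x) (mul x z)] at hz
    rw [hz]
    simp only [map_add, LinearMap.add_apply]
    abel
  have := congrArg (fun g : A →ₗ[K] A =>
      TensorProduct.map (LinearMap.id : A →ₗ[K] A) g a) op
  simp only [TensorProduct.map_add_right, LinearMap.add_apply] at this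
  linear_combination (norm := abel) this
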